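/- Let ω ∈ ℝ³ with 0 < ‖ω‖ < π and let Λ := exp(ω̂) be the matrix exponential of ω̂. Then 1 + Tr(Λ) ≠ 0, Λ + I₃ is invertible, and the inverse Cayley transform of the exponential satisfies 2 (Λ − I₃)(Λ + I₃)⁻¹ = (2 sin‖ω‖ / (‖ω‖ (1 + cos‖ω‖))) ω̂ = (tan(‖ω‖/2) / (‖ω‖/2)) ω̂. -/

import Mathlib

open Matrix

noncomputable section

lemma exp_aux {𝔸 : Type*} [NormedRing 𝔸] [NormedAlgebra ℝ 𝔸] [CompleteSpace 𝔸]
    (A : 𝔸) (θ : ℝ) (hθ : θ ≠ 0) (h3 : A ^ 3 = (-(θ ^ 2)) • A) :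
    NormedSpace.exp A = 1 + (Real.sin θ / θ) • A + ((1 - Real.cos θ) / θ ^ 2) • A ^ 2 := by
  have hodd : ∀ k : ℕ, A ^ (2 * k + 1) = ((-1 : ℝ) ^ k * θ ^ (2 * k)) • A := by
    intro k
    induction k with
    | zero => simp
    | succ k ih =>
      have : 2 * (k + 1) + 1 = (2 * k + 1) + 2 := by ring
      rw [this, pow_add, ih, smul_mul_assoc, ← pow_succ']
      norm_num
      rw [h3, smul_smul]
      congr 1
      ring
  have heven : ∀ k : ℕ, A ^ (2 * k + 2) = ((-1 : ℝ) ^ k * θ ^ (2 * k)) • A ^ 2 := by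
    intro k
    have : 2 * k + 2 = (2 * k + 1) + 1 := by ring
    rw [this, pow_succ, hodd k, smul_mul_assoc, ← sq]
  have key : HasSum (fun n : ℕ => ((n.factorial : ℝ)⁻¹) • A ^ n)
      ((1 + ((1 - Real.cos θ) / θ ^ 2) • A ^ 2) + (Real.sin θ / θ) • A) := by
    refine HasSum.even_add_odd ?_ ?_
    · -- even part
      have hc := Real.hasSum_cos θ
      have hc1 : HasSum (fun k : ℕ => (-1 : ℝ) ^ (k + 1) * θ ^ (2 * (k + 1)) / (↑(2 * (k + 1)).factorial : ℝ))
          (Real.cos θ - 1) := by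
        have := (hasSum_nat_add_iff' (f := fun n : ℕ => (-1 : ℝ) ^ n * θ ^ (2 * n) / (↑(2 * n).factorial : ℝ)) 1).2 hc
        simpa using this
      have hc2 : HasSum (fun k : ℕ => (-((-1 : ℝ) ^ (k + 1) * θ ^ (2 * (k + 1)) / (↑(2 * (k + 1)).factorial : ℝ))) / θ ^ 2)
          ((1 - Real.cos θ) / θ ^ 2) := by
        have := (hc1.neg).div_const (θ ^ 2)
        simpa [neg_sub] using this
      have hc3 := hc2.smul_const (A ^ 2)
      have hc4 : HasSum (fun k : ℕ => (((↑(2 * (k + 1)).factorial : ℝ) : ℝ)⁻¹) • A ^ (2 * (k + 1)))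
          (((1 - Real.cos θ) / θ ^ 2) • A ^ 2) := by
        convert hc3 using 2 with k
        have h2 : 2 * (k + 1) = 2 * k + 2 := by ring
        rw [h2, heven k, smul_smul]
        congr 1
        have hfac : (((2 * k + 2).factorial : ℝ)) ≠ 0 := by positivity
        field_simp
        ring
      have := HasSum.zero_add (f := fun k : ℕ => (((↑(2 * k).factorial : ℝ) : ℝ)⁻¹) • A ^ (2 * k))
        (by convert hc4 using 2 with k)
      simpa [add_comm] using this
    · -- odd part
      have hs := (Real.hasSum_sin θ).div_const θ
      have hs2 := hs.smul_const A
      convert hs2 using 2 with k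
      rw [hodd k, smul_smul]
      congr 1
      have hfac : (((2 * k + 1).factorial : ℝ)) ≠ 0 := by positivity
      field_simp
      ring
  rw [NormedSpace.exp_eq_tsum (𝕂 := ℝ)]
  exact key.tsum_eq.trans (by abel)


/-- The hat map `ω ↦ ω̂` sending a vector in `ℝ³` to the skew-symmetric matrix
satisfying `ω̂ v = ω × v`. -/
def hat (ω : EuclideanSpace ℝ (Fin 3)) : Matrix (Fin 3) (Fin 3) ℝ :=
  !![0, -ω 2, ω 1; ω 2, 0, -ω 0; -ω 1, ω 0, 0]

/-- For `ω ∈ ℝ³` with `0 < ‖ω‖ < π` and `Λ := exp(ω̂)`, one has `1 + Tr Λ ≠ 0`,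
`Λ + I₃` is invertible, and the inverse Cayley transform of the exponential is
`2(Λ − I₃)(Λ + I₃)⁻¹ = (2 sin‖ω‖/(‖ω‖(1+cos‖ω‖))) ω̂ = (tan(‖ω‖/2)/(‖ω‖/2)) ω̂`. -/
theorem inverse_cayley_of_exp (ω : EuclideanSpace ℝ (Fin 3))
    (hpos : 0 < ‖ω‖) (hlt : ‖ω‖ < Real.pi) :
    1 + (NormedSpace.exp (hat ω)).trace ≠ 0 ∧
    IsUnit (NormedSpace.exp (hat ω) + 1) ∧
    (2 : ℝ) • ((NormedSpace.exp (hat ω) - 1) * (NormedSpace.exp (hat ω) + 1)⁻¹)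
      = (2 * Real.sin ‖ω‖ / (‖ω‖ * (1 + Real.cos ‖ω‖))) • hat ω ∧
    (2 * Real.sin ‖ω‖ / (‖ω‖ * (1 + Real.cos ‖ω‖))) • hat ω
      = (Real.tan (‖ω‖ / 2) / (‖ω‖ / 2)) • hat ω := by
  set θ : ℝ := ‖ω‖ with hθdef
  have hθ : θ ≠ 0 := ne_of_gt hpos
  set B : Matrix (Fin 3) (Fin 3) ℝ := hat ω with hBdef
  -- trig facts
  have hc2pos : 0 < Real.cos (θ / 2) :=
    Real.cos_pos_of_mem_Ioo ⟨by linarith [Real.pi_pos], by linarith⟩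
  have hcs : Real.cos (θ / 2) ^ 2 = 1 / 2 + Real.cos θ / 2 := by
    have := Real.cos_sq (θ / 2)
    rwa [show 2 * (θ / 2) = θ by ring] at this
  have hc1 : 0 < 1 + Real.cos θ := by nlinarith
  have pyth : Real.sin θ ^ 2 + Real.cos θ ^ 2 = 1 := Real.sin_sq_add_cos_sq θ
  have hθ2 : θ ^ 2 = ω 0 ^ 2 + ω 1 ^ 2 + ω 2 ^ 2 := by
    rw [hθdef, EuclideanSpace.norm_eq, Real.sq_sqrt (by positivity)]
    simp [Fin.sum_univ_three]
  have hB3 : B ^ 3 = (-(θ ^ 2)) • B := by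
    ext i j
    fin_cases i <;> fin_cases j <;>
      simp [hBdef, pow_succ, hat, Matrix.mul_apply, Fin.sum_univ_succ, hθ2] <;> ring
  have hexp : NormedSpace.exp B
      = 1 + (Real.sin θ / θ) • B + ((1 - Real.cos θ) / θ ^ 2) • B ^ 2 := by
    letI : SeminormedRing (Matrix (Fin 3) (Fin 3) ℝ) := Matrix.linftyOpSemiNormedRing
    letI : NormedRing (Matrix (Fin 3) (Fin 3) ℝ) := Matrix.linftyOpNormedRing
    letI : NormedAlgebra ℝ (Matrix (Fin 3) (Fin 3) ℝ) := Matrix.linftyOpNormedAlgebra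
    exact exp_aux B θ hθ hB3
  have htrB : B.trace = 0 := by simp [hBdef, hat, Matrix.trace_fin_three]
  have htrB2 : (B ^ 2).trace = -(2 * θ ^ 2) := by
    rw [sq]
    simp [hBdef, hat, Matrix.trace_fin_three, Matrix.mul_apply, Fin.sum_univ_succ]
    linear_combination (2 : ℝ) * hθ2
  have e1 : B * B = B ^ 2 := (sq B).symm
  have e2 : B ^ 2 * B = B ^ 3 := (pow_succ B 2).symm
  have e2' : B * B ^ 2 = B ^ 3 := (pow_succ' B 2).symm
  have hmul : ∀ p q r p' q' : ℝ,
      (p • (1 : Matrix (Fin 3) (Fin 3) ℝ) + q • B + r • B ^ 2) * (p' • 1 + q' • B)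
        = (p * p') • 1 + (p * q' + q * p' - r * q' * θ ^ 2) • B + (r * p' + q * q') • B ^ 2 := by
    intro p q r p' q'
    simp only [add_mul, mul_add, smul_mul_smul_comm, one_mul, mul_one, e1, e2, hB3, smul_smul]
    match_scalars <;> ring
  have hmul' : ∀ p q r p' q' : ℝ,
      (p' • (1 : Matrix (Fin 3) (Fin 3) ℝ) + q' • B) * (p • 1 + q • B + r • B ^ 2)
        = (p * p') • 1 + (p * q' + q * p' - r * q' * θ ^ 2) • B + (r * p' + q * q') • B ^ 2 := by
    intro p q r p' q'
    simp only [add_mul, mul_add, smul_mul_smul_comm, one_mul, mul_one, e1, e2', hB3, smul_smul]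
    match_scalars <;> ring
  set a : ℝ := Real.sin θ / θ with hadef
  set b : ℝ := (1 - Real.cos θ) / θ ^ 2 with hbdef
  set y : ℝ := -(Real.sin θ / (2 * θ * (1 + Real.cos θ))) with hydef
  set M : Matrix (Fin 3) (Fin 3) ℝ := (1 / 2 : ℝ) • 1 + y • B with hMdef
  have hΛ1 : NormedSpace.exp B + 1 = (2 : ℝ) • 1 + a • B + b • B ^ 2 := by
    rw [hexp]; module
  have hΛm : NormedSpace.exp B - 1 = (0 : ℝ) • 1 + a • B + b • B ^ 2 := by
    rw [hexp]; module
  have hcoefB : 2 * (1 / 2 : ℝ) = 1 := by norm_num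
  have hMr : (NormedSpace.exp B + 1) * M = 1 := by
    rw [hΛ1, hMdef, hmul]
    have c1 : (2 : ℝ) * (1 / 2) = 1 := by norm_num
    have c2 : 2 * y + a * (1 / 2) - b * y * θ ^ 2 = 0 := by
      rw [hadef, hbdef, hydef]; field_simp; ring
    have c3 : b * (1 / 2) + a * y = 0 := by
      rw [hadef, hbdef, hydef]; field_simp
      linear_combination (-1 : ℝ) * pyth
    rw [c1, c2, c3, one_smul, zero_smul, zero_smul, add_zero, add_zero]
  have hMl : M * (NormedSpace.exp B + 1) = 1 := by
    rw [hΛ1, hMdef, hmul']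
    have c1 : (2 : ℝ) * (1 / 2) = 1 := by norm_num
    have c2 : 2 * y + a * (1 / 2) - b * y * θ ^ 2 = 0 := by
      rw [hadef, hbdef, hydef]; field_simp; ring
    have c3 : b * (1 / 2) + a * y = 0 := by
      rw [hadef, hbdef, hydef]; field_simp
      linear_combination (-1 : ℝ) * pyth
    rw [c1, c2, c3, one_smul, zero_smul, zero_smul, add_zero, add_zero]
  have hinv : (NormedSpace.exp B + 1)⁻¹ = M := Matrix.inv_eq_right_inv hMr
  refine ⟨?_, ⟨⟨NormedSpace.exp B + 1, M, hMr, hMl⟩, rfl⟩, ?_, ?_⟩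
  · have : 1 + (NormedSpace.exp B).trace = 2 * (1 + Real.cos θ) := by
      rw [hexp, Matrix.trace_add, Matrix.trace_add, Matrix.trace_smul, Matrix.trace_smul,
        Matrix.trace_one, htrB, htrB2]
      simp only [smul_eq_mul, smul_zero, add_zero]
      rw [hbdef]
      field_simp
      rw [Fintype.card_fin]; push_cast
      ring
    rw [this]
    positivity
  · rw [hinv, hΛm, hMdef, hmul]
    have c1 : (0 : ℝ) * (1 / 2) = 0 := by norm_num
    have c3 : b * (1 / 2) + a * y = 0 := by
      rw [hadef, hbdef, hydef]; field_simp
      linear_combination (-1 : ℝ) * pyth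
    rw [c1, c3, zero_smul, zero_smul, zero_add, add_zero]
    rw [smul_smul]
    congr 1
    rw [hadef, hbdef, hydef]
    field_simp
    ring
  · congr 1
    have hs2 : Real.sin θ = 2 * Real.sin (θ / 2) * Real.cos (θ / 2) := by
      have := Real.sin_two_mul (θ / 2)
      rwa [show 2 * (θ / 2) = θ by ring] at this
    rw [Real.tan_eq_sin_div_cos]
    rw [hs2]
    field_simp
    linear_combination (2 * Real.sin (θ / 2)) * hcs
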